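/- Let g : ℝ^d → ℝ be convex and differentiable with l-Lipschitz gradient, let L > l, and let Θ ⊆ ℝ^d be nonempty. Suppose θ_{m+1} minimizes over Θ the function θ ↦ ‖θ - (θ_m - (1/L)∇g(θ_m))‖₂². Then g(θ_m) - g(θ_{m+1}) ≥ ((L - l)/2)‖θ_m - θ_{m+1}‖₂². -/

import Mathlib

open InnerProductSpace

lemma descent_lemma {d : ℕ} (g : EuclideanSpace ℝ (Fin d) → ℝ) (l : ℝ)
    (hdiff : Differentiable ℝ g)
    (hlip : ∀ θ θ' : EuclideanSpace ℝ (Fin d),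
      ‖gradient g θ - gradient g θ'‖ ≤ l * ‖θ - θ'‖)
    (x y : EuclideanSpace ℝ (Fin d)) :
    g y ≤ g x + ⟪gradient g x, y - x⟫_ℝ + l / 2 * ‖y - x‖ ^ 2 := by
  set v := y - x with hv
  set ψ : ℝ → ℝ := fun t => g (x + t • v) - t * ⟪gradient g x, v⟫_ℝ - l / 2 * t ^ 2 * ‖v‖ ^ 2
    with hψ
  have hgrad : ∀ p : EuclideanSpace ℝ (Fin d), (fderiv ℝ g p) v = ⟪gradient g p, v⟫_ℝ := by
    intro p
    rw [gradient, ← toDual_apply_apply]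
    simp
  have hderiv : ∀ t : ℝ, HasDerivAt ψ
      (⟪gradient g (x + t • v), v⟫_ℝ - ⟪gradient g x, v⟫_ℝ - l * t * ‖v‖ ^ 2) t := by
    intro t
    have line : HasDerivAt (fun t : ℝ => x + t • v) v t := by
      simpa using ((hasDerivAt_id t).smul_const v).const_add x
    have h1 : HasDerivAt (fun t : ℝ => g (x + t • v)) (⟪gradient g (x + t • v), v⟫_ℝ) t := by
      have := (hdiff (x + t • v)).hasFDerivAt.comp_hasDerivAt t line
      rwa [hgrad] at this
    have h2 : HasDerivAt (fun t : ℝ => t * ⟪gradient g x, v⟫_ℝ) (⟪gradient g x, v⟫_ℝ) t := by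
      simpa using (hasDerivAt_id t).mul_const (⟪gradient g x, v⟫_ℝ)
    have h3 : HasDerivAt (fun t : ℝ => l / 2 * t ^ 2 * ‖v‖ ^ 2) (l * t * ‖v‖ ^ 2) t := by
      have : HasDerivAt (fun t : ℝ => t ^ 2) (2 * t) t := by
        simpa using hasDerivAt_pow 2 t
      have := (this.const_mul (l / 2)).mul_const (‖v‖ ^ 2)
      rw [show l * t * ‖v‖ ^ 2 = l / 2 * (2 * t) * ‖v‖ ^ 2 by ring]
      exact this
    exact (h1.sub h2).sub h3
  have hanti : AntitoneOn ψ (Set.Icc 0 1) := by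
    apply antitoneOn_of_deriv_nonpos (convex_Icc 0 1)
    · have hc : Continuous ψ := by
        refine ((hdiff.continuous.comp ?_).sub ?_).sub ?_
        · exact continuous_const.add (continuous_id.smul continuous_const)
        · exact continuous_id.mul continuous_const
        · exact (continuous_const.mul (continuous_pow 2)).mul continuous_const
      exact hc.continuousOn
    · intro t _
      exact (hderiv t).differentiableAt.differentiableWithinAt
    · intro t ht
      rw [interior_Icc] at ht
      rw [(hderiv t).deriv]
      have key : ⟪gradient g (x + t • v) - gradient g x, v⟫_ℝ ≤ l * t * ‖v‖ ^ 2 := by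
        calc ⟪gradient g (x + t • v) - gradient g x, v⟫_ℝ
            ≤ ‖gradient g (x + t • v) - gradient g x‖ * ‖v‖ := real_inner_le_norm _ _
          _ ≤ (l * ‖(x + t • v) - x‖) * ‖v‖ :=
              mul_le_mul_of_nonneg_right (hlip _ _) (norm_nonneg _)
          _ = l * t * ‖v‖ ^ 2 := by
              rw [add_sub_cancel_left, norm_smul, Real.norm_eq_abs,
                abs_of_pos ht.1]
              ring
      have := key
      rw [inner_sub_left] at this
      linarith
  have h01 : ψ 1 ≤ ψ 0 := hanti (by norm_num) (by norm_num) (by norm_num)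
  simp only [hψ, one_smul, zero_smul, add_zero, one_pow, one_mul, zero_mul, sub_zero,
    mul_zero, add_sub_cancel] at h01
  have : x + v = y := by rw [hv]; abel
  rw [this] at h01
  linarith

/-- Sufficient decrease for one step of projected gradient descent with step `1/L`, `L > l`,
onto an arbitrary nonempty constraint set `Θ`. -/
theorem projected_gradient_sufficient_decrease {d : ℕ}
    (g : EuclideanSpace ℝ (Fin d) → ℝ) (l L : ℝ)
    (hconv : ConvexOn ℝ Set.univ g)
    (hdiff : Differentiable ℝ g)
    (hlip : ∀ θ θ' : EuclideanSpace ℝ (Fin d),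
      ‖gradient g θ - gradient g θ'‖ ≤ l * ‖θ - θ'‖)
    (hL : l < L)
    (Θ : Set (EuclideanSpace ℝ (Fin d))) (hΘ : Θ.Nonempty)
    (θm θm1 : EuclideanSpace ℝ (Fin d)) (hθm : θm ∈ Θ) (hθm1 : θm1 ∈ Θ)
    (hmin : ∀ θ ∈ Θ, ‖θm1 - (θm - (1 / L) • gradient g θm)‖ ^ 2 ≤
      ‖θ - (θm - (1 / L) • gradient g θm)‖ ^ 2) :
    g θm - g θm1 ≥ (L - l) / 2 * ‖θm - θm1‖ ^ 2 := by
  by_cases heq : θm1 = θm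
  · simp [heq]
  · have hne : θm - θm1 ≠ 0 := sub_ne_zero.mpr (Ne.symm heq)
    have hnorm : 0 < ‖θm - θm1‖ := norm_pos_iff.mpr hne
    have hl0 : 0 ≤ l := by
      have h0 := (norm_nonneg (gradient g θm - gradient g θm1)).trans (hlip θm θm1)
      nlinarith [h0, hnorm]
    have hL0 : 0 < L := lt_of_le_of_lt hl0 hL
    set G := gradient g θm with hG
    set u := θm1 - θm with hu
    have hmin' := hmin θm hθm
    have hrw1 : θm1 - (θm - (1 / L) • G) = u + (1 / L) • G := by
      rw [hu]; abel
    have hrw2 : θm - (θm - (1 / L) • G) = (1 / L) • G := by abel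
    rw [hrw1, hrw2, norm_add_sq_real] at hmin'
    have hinner : ⟪u, (1 / L) • G⟫_ℝ = (1 / L) * ⟪u, G⟫_ℝ := real_inner_smul_right _ _ _
    rw [hinner] at hmin'
    have key : ⟪u, G⟫_ℝ ≤ -(L / 2) * ‖u‖ ^ 2 := by
      have h2 : ‖u‖ ^ 2 + 2 * ((1 / L) * ⟪u, G⟫_ℝ) ≤ 0 := by linarith
      have h3 : L * (‖u‖ ^ 2 + 2 * ((1 / L) * ⟪u, G⟫_ℝ)) ≤ 0 :=
        mul_nonpos_of_nonneg_of_nonpos hL0.le h2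
      have h4 : L * (2 * ((1 / L) * ⟪u, G⟫_ℝ)) = 2 * ⟪u, G⟫_ℝ := by
        field_simp
      nlinarith
    have hdesc := descent_lemma g l hdiff hlip θm θm1
    rw [← hu, ← hG, real_inner_comm] at hdesc
    have hnormeq : ‖u‖ = ‖θm - θm1‖ := by rw [hu, norm_sub_rev]
    rw [hnormeq] at key hdesc
    linarith
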